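/- Let Λ be an infinite irreducible preordered set with finite neighborhoods (N_1(s) finite for all s) and P a finite commutative ring with the discrete topology. Then the quasicentre QZ(GL_Λ(P)) = {g : the centralizer C(g) is open} is dense in the profinite group GL_Λ(P). -/

import Mathlib

open Finset

namespace Stmt19Aux

variable {Λ P : Type*} [Preorder Λ] [LocallyFiniteOrder Λ] [DecidableEq Λ] [CommRing P]

/-- Truncation of an incidence-algebra element to a finite set, identity outside. -/
def trunc (f : IncidenceAlgebra P Λ) (S : Finset Λ) : IncidenceAlgebra P Λ :=
  ⟨fun a b => if a ∈ S ∧ b ∈ S then f a b else if a = b then 1 else 0, by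
    intro a b hab
    split_ifs with h1 h2
    · exact IncidenceAlgebra.apply_eq_zero_of_not_le hab f
    · exact absurd h2.le hab
    · rfl⟩

lemma trunc_apply (f : IncidenceAlgebra P Λ) (S : Finset Λ) (a b : Λ) :
    trunc f S a b = if a ∈ S ∧ b ∈ S then f a b else if a = b then 1 else 0 := rfl

lemma trunc_mul_trunc {S : Finset Λ}
    (hS : ∀ ⦃a⦄, a ∈ S → ∀ ⦃b⦄, b ∈ S → ∀ ⦃c⦄, a ≤ c → c ≤ b → c ∈ S)
    {f g : IncidenceAlgebra P Λ} (hfg : f * g = 1) :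
    trunc f S * trunc g S = 1 := by
  ext a b hab
  rw [IncidenceAlgebra.mul_apply]
  by_cases ha : a ∈ S
  · by_cases hb : b ∈ S
    · have h1 : ∀ x ∈ Icc a b, trunc f S a x * trunc g S x b = f a x * g x b := by
        intro x hx
        obtain ⟨h1, h2⟩ := mem_Icc.1 hx
        rw [trunc_apply, trunc_apply, if_pos ⟨ha, hS ha hb h1 h2⟩, if_pos ⟨hS ha hb h1 h2, hb⟩]
      rw [Finset.sum_congr rfl h1]
      have h2 := congrFun (congrFun (congrArg (DFunLike.coe) hfg) a) b
      rwa [IncidenceAlgebra.mul_apply] at h2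
    · have h1 : ∀ x ∈ Icc a b, trunc f S a x * trunc g S x b
          = if x = b then trunc f S a x else 0 := by
        intro x _
        rw [trunc_apply g, if_neg (fun h => hb h.2)]
        by_cases hxb : x = b <;> simp [hxb]
      rw [Finset.sum_congr rfl h1, Finset.sum_ite_eq' (Icc a b) b _,
        if_pos (mem_Icc.2 ⟨hab, le_refl b⟩), trunc_apply, if_neg (fun h => hb h.2)]
      rfl
  · have h1 : ∀ x ∈ Icc a b, trunc f S a x * trunc g S x b
        = if a = x then trunc g S x b else 0 := by
      intro x _
      rw [trunc_apply f, if_neg (fun h => ha h.1)]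
      by_cases hax : a = x <;> simp [hax]
    rw [Finset.sum_congr rfl h1, Finset.sum_ite_eq (Icc a b) a _,
      if_pos (mem_Icc.2 ⟨le_refl a, hab⟩), trunc_apply, if_neg (fun h => ha h.1)]
    rfl

lemma isOpen_determined {ι κ : Type*} [TopologicalSpace P] [DiscreteTopology P]
    (K : Finset (ι × κ)) (A : Set (ι → κ → P))
    (hA : ∀ f g : ι → κ → P, (∀ p ∈ K, f p.1 p.2 = g p.1 p.2) → f ∈ A → g ∈ A) :
    IsOpen A := by
  have hA' : A = ⋃ f ∈ A, ⋂ p ∈ K, {g : ι → κ → P | g p.1 p.2 = f p.1 p.2} := by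
    ext g
    simp only [Set.mem_iUnion, Set.mem_iInter, Set.mem_setOf_eq]
    constructor
    · exact fun hg => ⟨g, hg, fun p _ => rfl⟩
    · rintro ⟨f, hf, hfg⟩
      exact hA f g (fun p hp => (hfg p hp).symm) hf
  rw [hA']
  refine isOpen_biUnion fun f _ => isOpen_biInter_finset fun p _ => ?_
  have hc : Continuous fun g : ι → κ → P => g p.1 p.2 :=
    (continuous_apply p.2).comp (continuous_apply p.1)
  exact hc.isOpen_preimage {f p.1 p.2} (isOpen_discrete _)

end Stmt19Aux

/-- Let `Λ` be an infinite irreducible locally finite preordered set with finite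
neighbourhoods (`N₁(s)` finite for all `s`) and `P` a finite commutative ring with
the discrete topology.  Then the quasicentre
`QZ(GL_Λ(P)) = {g : the centralizer of g is open}` is dense in `GL_Λ(P)` (topologized
as a subspace of the product `P^{Λ×Λ}`). -/
theorem stmt19 {Λ P : Type*} [Preorder Λ] [LocallyFiniteOrder Λ] [DecidableEq Λ]
    [Infinite Λ] [CommRing P] [Finite P]
    (hirr : ∀ s t : Λ, Relation.ReflTransGen (fun a b : Λ => a ≤ b ∨ b ≤ a) s t)
    (hnbhd : ∀ s : Λ, {t : Λ | t ≤ s ∨ s ≤ t}.Finite) :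
    letI : TopologicalSpace P := ⊥
    letI : TopologicalSpace (IncidenceAlgebra P Λ)ˣ :=
      TopologicalSpace.induced
        (fun A : (IncidenceAlgebra P Λ)ˣ => ⇑(A : IncidenceAlgebra P Λ))
        Pi.topologicalSpace
    Dense {g : (IncidenceAlgebra P Λ)ˣ |
      IsOpen {h : (IncidenceAlgebra P Λ)ˣ | h * g = g * h}} := by
  classical
  letI : TopologicalSpace P := ⊥
  haveI : DiscreteTopology P := ⟨rfl⟩
  letI : TopologicalSpace (IncidenceAlgebra P Λ)ˣ :=
    TopologicalSpace.induced
      (fun A : (IncidenceAlgebra P Λ)ˣ => ⇑(A : IncidenceAlgebra P Λ))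
      Pi.topologicalSpace
  rw [dense_iff_inter_open]
  rintro U hU ⟨g, hgU⟩
  rw [isOpen_induced_iff] at hU
  obtain ⟨V, hV, rfl⟩ := hU
  obtain ⟨I, uu, huu, hsub⟩ := isOpen_pi_iff.1 hV _ hgU
  have h2 : ∀ a : Λ, ∃ J : Finset Λ, a ∈ I → ∀ f : Λ → P,
      (∀ b ∈ J, f b = (g : IncidenceAlgebra P Λ) a b) → f ∈ uu a := by
    intro a
    by_cases ha : a ∈ I
    · obtain ⟨J, v, hv, hsub'⟩ := isOpen_pi_iff.1 (huu a ha).1 _ (huu a ha).2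
      refine ⟨J, fun _ f hf => hsub' fun b hb => ?_⟩
      rw [hf b hb]; exact (hv b hb).2
    · exact ⟨∅, fun ha' => absurd ha' ha⟩
  choose J hJ using h2
  set T : Finset Λ := I ∪ I.biUnion J with hT
  set S : Finset Λ := (T ×ˢ T).biUnion (fun p => Icc p.1 p.2) with hSdef
  have hTS : T ⊆ S := fun a ha =>
    mem_biUnion.2 ⟨(a, a), mem_product.2 ⟨ha, ha⟩, mem_Icc.2 ⟨le_refl a, le_refl a⟩⟩
  have hconv : ∀ ⦃a⦄, a ∈ S → ∀ ⦃b⦄, b ∈ S → ∀ ⦃c⦄, a ≤ c → c ≤ b → c ∈ S := by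
    intro a ha b hb c hac hcb
    obtain ⟨p, hp, hap⟩ := mem_biUnion.1 ha
    obtain ⟨q, hq, hbq⟩ := mem_biUnion.1 hb
    exact mem_biUnion.2 ⟨(p.1, q.2),
      mem_product.2 ⟨(mem_product.1 hp).1, (mem_product.1 hq).2⟩,
      mem_Icc.2 ⟨(mem_Icc.1 hap).1.trans hac, hcb.trans (mem_Icc.1 hbq).2⟩⟩
  refine ⟨⟨Stmt19Aux.trunc (↑g) S, Stmt19Aux.trunc (↑g⁻¹) S,
      Stmt19Aux.trunc_mul_trunc hconv (Units.mul_inv g),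
      Stmt19Aux.trunc_mul_trunc hconv (Units.inv_mul g)⟩, ?_, ?_⟩
  · -- membership in the open set
    apply hsub
    rw [Set.mem_pi]
    intro a ha
    apply hJ a ha
    intro b hb
    have haS : a ∈ S := hTS (mem_union_left _ ha)
    have hbS : b ∈ S := hTS (mem_union_right _ (mem_biUnion.2 ⟨a, ha, hb⟩))
    exact (if_pos ⟨haS, hbS⟩ :
      (if a ∈ S ∧ b ∈ S then (g : IncidenceAlgebra P Λ) a b else if a = b then 1 else 0)
        = (g : IncidenceAlgebra P Λ) a b)
  · -- the centralizer is open
    simp only [Set.mem_setOf_eq]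
    set t : IncidenceAlgebra P Λ := Stmt19Aux.trunc (↑g) S with ht
    set n : Λ → Λ → P := fun a b => t a b - (if a = b then 1 else 0) with hn
    have hnS : ∀ a b : Λ, ¬(a ∈ S ∧ b ∈ S) → n a b = 0 := by
      intro a b h
      rw [hn]
      simp only [ht, Stmt19Aux.trunc_apply, if_neg h, sub_self]
    set N : Finset Λ := S.biUnion (fun c => (hnbhd c).toFinset) with hNdef
    have hSN : S ⊆ N := fun c hc =>
      mem_biUnion.2 ⟨c, hc, (hnbhd c).mem_toFinset.2 (Or.inl le_rfl)⟩
    have hmemN : ∀ {a c : Λ}, c ∈ S → (a ≤ c ∨ c ≤ a) → a ∈ N := fun hc h =>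
      mem_biUnion.2 ⟨_, hc, (hnbhd _).mem_toFinset.2 h⟩
    have key1 : ∀ (f : Λ → Λ → P) (a b : Λ),
        ∑ x ∈ Icc a b, f a x * t x b
          = (if a ≤ b then f a b else 0) + ∑ x ∈ Icc a b, f a x * n x b := by
      intro f a b
      have h1 : ∀ x ∈ Icc a b,
          f a x * t x b = (if x = b then f a x else 0) + f a x * n x b := by
        intro x _
        have h2 : t x b = (if x = b then 1 else 0) + n x b := by rw [hn]; ring
        rw [h2, mul_add]
        congr 1
        by_cases hxb : x = b <;> simp [hxb]
      rw [Finset.sum_congr rfl h1, Finset.sum_add_distrib,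
        Finset.sum_ite_eq' (Icc a b) b]
      congr 1
      by_cases hab : a ≤ b
      · rw [if_pos (mem_Icc.2 ⟨hab, le_rfl⟩), if_pos hab]
      · rw [if_neg (fun h => hab (mem_Icc.1 h).1), if_neg hab]
    have key2 : ∀ (f : Λ → Λ → P) (a b : Λ),
        ∑ x ∈ Icc a b, t a x * f x b
          = (if a ≤ b then f a b else 0) + ∑ x ∈ Icc a b, n a x * f x b := by
      intro f a b
      have h1 : ∀ x ∈ Icc a b,
          t a x * f x b = (if a = x then f x b else 0) + n a x * f x b := by
        intro x _
        have h2 : t a x = (if a = x then 1 else 0) + n a x := by rw [hn]; ring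
        rw [h2, add_mul]
        congr 1
        by_cases hax : a = x <;> simp [hax]
      rw [Finset.sum_congr rfl h1, Finset.sum_add_distrib,
        Finset.sum_ite_eq (Icc a b) a]
      congr 1
      by_cases hab : a ≤ b
      · rw [if_pos (mem_Icc.2 ⟨le_rfl, hab⟩), if_pos hab]
      · rw [if_neg (fun h => hab (mem_Icc.1 h).2), if_neg hab]
    set W : Set (Λ → Λ → P) :=
      {f | ∀ a b : Λ,
        ∑ x ∈ Icc a b, f a x * t x b = ∑ x ∈ Icc a b, t a x * f x b} with hW
    rw [isOpen_induced_iff]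
    refine ⟨W, ?_, ?_⟩
    · -- W is open: determined by coordinates in N ×ˢ N
      apply Stmt19Aux.isOpen_determined (N ×ˢ N)
      intro f f' hagree hf a b
      have e1 : ∑ x ∈ Icc a b, f' a x * n x b = ∑ x ∈ Icc a b, f a x * n x b := by
        refine Finset.sum_congr rfl fun x hx => ?_
        by_cases hnx : n x b = 0
        · rw [hnx, mul_zero, mul_zero]
        · have hxb : x ∈ S ∧ b ∈ S := by
            by_contra h; exact hnx (hnS x b h)
          have haN : a ∈ N := hmemN hxb.1 (Or.inl (mem_Icc.1 hx).1)
          have hxN : x ∈ N := hSN hxb.1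
          rw [hagree (a, x) (mem_product.2 ⟨haN, hxN⟩)]
      have e2 : ∑ x ∈ Icc a b, n a x * f' x b = ∑ x ∈ Icc a b, n a x * f x b := by
        refine Finset.sum_congr rfl fun x hx => ?_
        by_cases hnx : n a x = 0
        · rw [hnx, zero_mul, zero_mul]
        · have hax : a ∈ S ∧ x ∈ S := by
            by_contra h; exact hnx (hnS a x h)
          have hbN : b ∈ N := hmemN hax.2 (Or.inr (mem_Icc.1 hx).2)
          have hxN : x ∈ N := hSN hax.2
          rw [hagree (x, b) (mem_product.2 ⟨hxN, hbN⟩)]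
      have hfab := hf a b
      rw [key1 f a b, key2 f a b] at hfab
      have hfab' := add_left_cancel hfab
      rw [key1 f' a b, key2 f' a b, e1, e2, hfab']
    · -- preimage of W is the centralizer
      ext h
      simp only [Set.mem_preimage, hW, Set.mem_setOf_eq]
      constructor
      · intro hh
        refine Units.ext ?_
        rw [Units.val_mul, Units.val_mul]
        ext a b _
        rw [IncidenceAlgebra.mul_apply, IncidenceAlgebra.mul_apply]
        exact hh a b
      · intro hh a b
        have h3 := congrFun (congrFun (congrArg DFunLike.coe (congrArg Units.val hh)) a) b
        rw [Units.val_mul, Units.val_mul, IncidenceAlgebra.mul_apply,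
          IncidenceAlgebra.mul_apply] at h3
        exact h3
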